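/- arXiv:1405.4892 — 2 statements merged into one kernel-verified Lean document; each statement's English description precedes it below -/
import Mathlib

section
/- Let w = (uav')^k u, where u, v' ∈ Σ*, a ∈ Σ, k ≥ 1 and uav' is a Lyndon word. If a' ∈ Σ and a < a', then wa' is a Lyndon word. -/
variable {α : Type*}

/-- The rotation `rot(w,i) = w[i..|w|-1] w[0..i-1]`. -/
def rot (w : List α) (i : ℕ) : List α := w.drop i ++ w.take i

/-- A Lyndon word: a nonempty word strictly smaller than all of its proper rotations. -/
def IsLyndon [LinearOrder α] (w : List α) : Prop :=
  w ≠ [] ∧ ∀ i, 0 < i → i < w.length → w < rot w i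

/-- `IsCFL w f` : `f` is the Chen–Fox–Lyndon factorization of `w`, i.e. a
nonincreasing sequence of Lyndon words whose concatenation is `w`. -/
def IsCFL [LinearOrder α] (w : List α) (f : List (List α)) : Prop :=
  f.flatten = w ∧ (∀ x ∈ f, IsLyndon x) ∧ f.Chain' (· ≥ ·)

/-- `u^k` : the `k`-fold concatenation of the word `u`. -/
def listPow (u : List α) (k : ℕ) : List α := (List.replicate k u).flatten

/-- `P`: the set of nonempty prefixes of Lyndon words. -/
def InP [LinearOrder α] (w : List α) : Prop :=
  w ≠ [] ∧ ∃ u : List α, IsLyndon (w ++ u)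

/-- `P' = P ∪ { c^k : k ≥ 2 }` where `c` is the maximum symbol of the alphabet. -/
def InP' [LinearOrder α] (w : List α) : Prop :=
  InP w ∨ ∃ (c : α) (k : ℕ), 2 ≤ k ∧ (∀ a : α, a ≤ c) ∧ w = List.replicate k c

/-- A border of `w`: a proper prefix of `w` that is also a suffix of `w`. -/
def IsBorder (b w : List α) : Prop := b <+: w ∧ b <:+ w ∧ b.length < w.length

/-- The length of the longest common prefix of two words. -/
def lcpLen [DecidableEq α] : List α → List α → ℕ
  | a :: u, b :: v => if a = b then lcpLen u v + 1 else 0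
  | _, _ => 0

/-! ### Auxiliary lemmas -/

lemma listPow_succ (t : List α) (k : ℕ) : listPow t (k + 1) = t ++ listPow t k := by
  simp [listPow, List.replicate_succ]

lemma listPow_one (t : List α) : listPow t 1 = t := by simp [listPow]

lemma listPow_add (t : List α) (m n : ℕ) :
    listPow t (m + n) = listPow t m ++ listPow t n := by
  induction m with
  | zero => simp [listPow]
  | succ m ih =>
    rw [Nat.succ_add, listPow_succ, listPow_succ, ih, List.append_assoc]

lemma length_listPow (t : List α) (k : ℕ) : (listPow t k).length = k * t.length := by
  induction k with
  | zero => simp [listPow]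
  | succ k ih => rw [listPow_succ]; simp [ih, Nat.succ_mul]; ring

section MismSection

variable [LinearOrder α]

/-- A "mismatch witness": `x` and `y` agree up to position `q` and `x[q] < y[q]`. -/
def Mism (x y : List α) : Prop :=
  ∃ q, x.take q = y.take q ∧
    ∃ (hx : q < x.length) (hy : q < y.length), x[q]'hx < y[q]'hy

lemma mism_lt {x y : List α} (h : Mism x y) : x < y := by
  obtain ⟨q, ht, hx, hy, hq⟩ := h
  induction q generalizing x y with
  | zero =>
    cases x with
    | nil => simp at hx
    | cons c x =>
      cases y with
      | nil => simp at hy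
      | cons d y =>
        exact List.Lex.rel (by simpa using hq)
  | succ q ih =>
    cases x with
    | nil => simp at hx
    | cons c x =>
      cases y with
      | nil => simp at hy
      | cons d y =>
        simp only [List.take_succ_cons, List.cons.injEq] at ht
        obtain ⟨rfl, ht⟩ := ht
        exact List.Lex.cons (ih ht (by simpa using hx) (by simpa using hy)
          (by simpa using hq))

lemma mism_mono {x y x' y' : List α} (hx : x <+: x') (hy : y <+: y')
    (h : Mism x y) : Mism x' y' := by
  obtain ⟨q, ht, hqx, hqy, hq⟩ := h
  obtain ⟨s, rfl⟩ := hx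
  obtain ⟨s', rfl⟩ := hy
  refine ⟨q, ?_, ?_, ?_, ?_⟩
  · rw [List.take_append_of_le_length hqx.le, List.take_append_of_le_length hqy.le, ht]
  · simp; omega
  · simp; omega
  · rw [List.getElem_append_left hqx, List.getElem_append_left hqy]; exact hq

lemma mism_or_prefix {x y : List α} (h : x < y) : Mism x y ∨ x <+: y := by
  have h' : List.Lex (· < ·) x y := h
  clear h
  induction h' with
  | nil => exact Or.inr (List.nil_prefix)
  | @rel c l₁ d l₂ hcd =>
    exact Or.inl ⟨0, by simp, by simp, by simp, by simpa using hcd⟩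
  | @cons c l₁ l₂ h ih =>
    rcases ih with ⟨q, ht, hqx, hqy, hq⟩ | h1
    · exact Or.inl ⟨q + 1, by simp [ht], by simpa using Nat.succ_lt_succ hqx,
        by simpa using Nat.succ_lt_succ hqy, by simpa using hq⟩
    · obtain ⟨s, rfl⟩ := h1
      exact Or.inr ⟨s, rfl⟩

lemma mism_of_lt_of_le {x y : List α} (h : x < y) (hl : y.length ≤ x.length) :
    Mism x y := by
  rcases mism_or_prefix h with hm | hp
  · exact hm
  · exact absurd (hp.eq_of_length_le hl) (fun e => absurd h (e ▸ lt_irrefl _))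

lemma mism_total {x y : List α} (hl : x.length = y.length) (hne : x ≠ y) :
    Mism x y ∨ Mism y x := by
  rcases lt_trichotomy x y with h | h | h
  · exact Or.inl (mism_of_lt_of_le h hl.ge)
  · exact absurd h hne
  · exact Or.inr (mism_of_lt_of_le h hl.le)

lemma append_lt_append_left_iff (p : List α) {x y : List α} :
    p ++ x < p ++ y ↔ x < y := by
  induction p with
  | nil => exact Iff.rfl
  | cons c p ih =>
    show List.Lex (· < ·) (c :: (p ++ x)) (c :: (p ++ y)) ↔ _
    rw [List.lex_cons_iff]
    exact ih

/-- A Lyndon word is smaller than each of its proper suffixes. -/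
lemma lyndon_lt_drop {t : List α} (h : IsLyndon t) {r : ℕ} (hr : 0 < r)
    (hrt : r < t.length) : t < t.drop r := by
  by_contra hnot
  have hrot : t < t.drop r ++ t.take r := h.2 r hr hrt
  have hle : t.drop r ≤ t := not_lt.mp hnot
  have hlen : (t.drop r).length = t.length - r := List.length_drop ..
  rcases lt_or_eq_of_le hle with hlt | heq
  · rcases mism_or_prefix hlt with hm | hpre
    · exact absurd hrot
        (lt_asymm (mism_lt (mism_mono (List.prefix_append _ _) List.prefix_rfl hm)))
    · -- border case
      obtain ⟨z, hz⟩ := hpre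
      have hzl : z.length = r := by
        have := congrArg List.length hz
        simp only [List.length_append, hlen] at this
        omega
      have hzp : z < t.take r := by
        have : t.drop r ++ z < t.drop r ++ t.take r := hz.symm ▸ hrot
        exact (append_lt_append_left_iff _).mp this
      have hm : Mism z (t.take r) :=
        mism_of_lt_of_le hzp (by simp [List.length_take]; omega)
      have hm2 : Mism (z ++ t.drop r) (t.take r ++ t.drop r) :=
        mism_mono (List.prefix_append _ _) (List.prefix_append _ _) hm
      have hrot2 : t < z ++ t.drop r := by
        have h1 : t.drop (t.length - r) = z := by
          have := List.drop_left' (l₁ := t.drop r) (l₂ := z) (i := t.length - r) hlen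
          rw [hz] at this; exact this
        have h2 : t.take (t.length - r) = t.drop r := by
          have := List.take_left' (l₁ := t.drop r) (l₂ := z) (i := t.length - r) hlen
          rw [hz] at this; exact this
        have := h.2 (t.length - r) (by omega) (by omega)
        rw [rot, h1, h2] at this; exact this
      rw [List.take_append_drop] at hm2
      exact absurd hrot2 (lt_asymm (mism_lt hm2))
  · have := congrArg List.length heq
    rw [hlen] at this
    omega

lemma isLyndon_of_lt_drop {x : List α} (hne : x ≠ [])
    (h : ∀ i, 0 < i → i < x.length → x < x.drop i) : IsLyndon x := by
  refine ⟨hne, fun i hi hix => ?_⟩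
  have h1 := h i hi hix
  have hm : Mism x (x.drop i) := by
    rcases mism_or_prefix h1 with hm | hpre
    · exact hm
    · have := hpre.length_le
      rw [List.length_drop] at this
      omega
  rw [rot]
  exact mism_lt (mism_mono List.prefix_rfl (List.prefix_append _ _) hm)

end MismSection

/-- For `w = (uav')^k u` with `uav'` a Lyndon word and `k ≥ 1`:
if `a < a'` then `wa'` is a Lyndon word. -/
theorem ext_larger_lyndon [LinearOrder α] (u v' : List α) (a a' : α) (k : ℕ)
    (hk : 1 ≤ k) (hL : IsLyndon (u ++ a :: v')) (ha : a < a') :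
    IsLyndon (listPow (u ++ a :: v') k ++ u ++ [a']) := by
  have hget_a' : ∀ (h : u.length < (u ++ a :: v').length),
      (u ++ a :: v')[u.length]'h = a := by
    intro h
    rw [List.getElem_append_right le_rfl]
    simp
  set t : List α := u ++ a :: v' with htdef
  have htlen : u.length < t.length := by simp [htdef]
  have htpos : 0 < t.length := by omega
  have htake_u : t.take u.length = u := List.take_left' rfl
  have hget_a : ∀ (h : u.length < t.length), t[u.length]'h = a := hget_a'
  -- key mismatch: anything starting with `t` is smaller than `u ++ [a']`
  have key1 : ∀ z : List α, Mism (t ++ z) (u ++ [a']) := by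
    intro z
    refine ⟨u.length, ?_, ?_, ?_, ?_⟩
    · rw [List.take_append_of_le_length htlen.le, htake_u, List.take_left]
    · simp; omega
    · simp
    · rw [List.getElem_append_left htlen, hget_a htlen]
      rw [List.getElem_append_right le_rfl]
      simpa using ha
  -- rewrite the word in a right-associated form
  have hx : listPow t k ++ u ++ [a'] = listPow t k ++ (u ++ [a']) := by
    rw [List.append_assoc]
  rw [hx]
  have hxsplit : listPow t k ++ (u ++ [a']) = t ++ (listPow t (k - 1) ++ (u ++ [a'])) := by
    conv_lhs => rw [show k = 1 + (k - 1) by omega, listPow_add, listPow_one,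
      List.append_assoc]
  apply isLyndon_of_lt_drop
  · rw [hxsplit]
    rcases t with _ | ⟨c, t⟩
    · simp at htpos
    · simp
  intro i hi hilen
  have hxlen : (listPow t k ++ (u ++ [a'])).length = k * t.length + (u.length + 1) := by
    simp [length_listPow]
  rw [hxlen] at hilen
  by_cases hcase : i < k * t.length
  · -- inside the power part
    obtain ⟨m, r, hrlt, hmr, hmk⟩ :
        ∃ m r, r < t.length ∧ t.length * m + r = i ∧ m < k :=
      ⟨i / t.length, i % t.length, Nat.mod_lt _ htpos, Nat.div_add_mod i t.length,
        Nat.div_lt_of_lt_mul (by rw [Nat.mul_comm]; exact hcase)⟩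
    have hdrop1 : (listPow t k ++ (u ++ [a'])).drop (t.length * m)
        = listPow t (k - m) ++ (u ++ [a']) := by
      conv_lhs => rw [show k = m + (k - m) by omega, listPow_add, List.append_assoc]
      exact List.drop_left' (by rw [length_listPow]; ring)
    have hdrop2 : (listPow t k ++ (u ++ [a'])).drop i
        = (listPow t (k - m) ++ (u ++ [a'])).drop r := by
      rw [← hmr, ← List.drop_drop, hdrop1]
    rcases Nat.eq_zero_or_pos r with hr0 | hrpos
    · -- i = t.length * m, with m ≥ 1
      have hm1 : 1 ≤ m := by
        rcases Nat.eq_zero_or_pos m with h0 | h1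
        · subst h0; simp at hmr; omega
        · exact h1
      rw [hdrop2, hr0, List.drop_zero]
      have hsplit : listPow t k ++ (u ++ [a'])
          = listPow t (k - m) ++ (listPow t m ++ (u ++ [a'])) := by
        conv_lhs => rw [show k = (k - m) + m by omega, listPow_add, List.append_assoc]
      rw [hsplit, append_lt_append_left_iff]
      have hmsplit : listPow t m ++ (u ++ [a'])
          = t ++ (listPow t (m - 1) ++ (u ++ [a'])) := by
        conv_lhs => rw [show m = 1 + (m - 1) by omega, listPow_add, listPow_one,
          List.append_assoc]
      rw [hmsplit]
      exact mism_lt (key1 _)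
    · -- proper suffix of t at the start
      have hkm : 1 ≤ k - m := by omega
      have hsplit4 : listPow t (k - m) ++ (u ++ [a'])
          = t ++ (listPow t (k - m - 1) ++ (u ++ [a'])) := by
        conv_lhs => rw [show k - m = 1 + (k - m - 1) by omega, listPow_add, listPow_one,
          List.append_assoc]
      have hdrop3 : (listPow t (k - m) ++ (u ++ [a'])).drop r
          = t.drop r ++ (listPow t (k - m - 1) ++ (u ++ [a'])) := by
        rw [hsplit4, List.drop_append,
          show r - t.length = 0 by omega, List.drop_zero]
      rw [hdrop2, hdrop3]
      have hA : t < t.drop r := lyndon_lt_drop hL hrpos hrlt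
      have hAm : Mism t (t.drop r) :=
        mism_of_lt_of_le hA (by rw [List.length_drop]; omega)
      rw [hxsplit]
      exact mism_lt (mism_mono (List.prefix_append _ _) (List.prefix_append _ _) hAm)
  · -- inside the final `u` (or at its very beginning)
    push_neg at hcase
    set r := i - k * t.length with hrdef
    have hru : r ≤ u.length := by omega
    have hdrop1 : (listPow t k ++ (u ++ [a'])).drop i = u.drop r ++ [a'] := by
      have h1 : (listPow t k ++ (u ++ [a'])).drop (k * t.length) = u ++ [a'] :=
        List.drop_left' (by rw [length_listPow])
      rw [show i = k * t.length + r by omega, ← List.drop_drop, h1,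
        List.drop_append, show r - u.length = 0 by omega,
        List.drop_zero]
    rw [hdrop1]
    rcases Nat.eq_zero_or_pos r with hr0 | hrpos
    · rw [hr0, List.drop_zero, hxsplit]
      exact mism_lt (key1 _)
    have hrt : r < t.length := by omega
    have hA : t < t.drop r := lyndon_lt_drop hL hrpos hrt
    have hnm : ¬ Mism (t.drop r) t := fun hm => absurd hA (lt_asymm (mism_lt hm))
    set d := u.length - r with hd
    have hdu : d < u.length := by omega
    have hdt : d < t.length := by omega
    have hdropt : t.drop r = u.drop r ++ (a :: v') := by
      rw [htdef, List.drop_append, show r - u.length = 0 by omega,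
        List.drop_zero]
    have hlen_ud : (u.drop r).length = d := by rw [List.length_drop]
    have hdrlen : d < (t.drop r).length := by rw [List.length_drop]; omega
    have hget_dr : (t.drop r)[d]'hdrlen = a := by
      simp only [hdropt]
      rw [List.getElem_append_right (by omega)]
      simp [hlen_ud]
    by_cases hc : t.take d = u.drop r
    · -- matched prefix: show t[d] ≤ a and conclude
      have hta : t[d]'hdt ≤ a := by
        by_contra h'
        push_neg at h'
        apply hnm
        refine ⟨d, ?_, hdrlen, hdt, ?_⟩
        · rw [hdropt, List.take_append_of_le_length (by omega),
            List.take_of_length_le (by omega), hc]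
        · rw [hget_dr]; exact h'
      refine mism_lt ⟨d, ?_, ?_, ?_, ?_⟩
      · rw [hxsplit, List.take_append_of_le_length (by omega), hc,
          List.take_append_of_le_length (by omega),
          List.take_of_length_le (by omega)]
      · rw [hxlen]; omega
      · simp; omega
      · simp only [hxsplit]
        rw [List.getElem_append_left hdt,
          List.getElem_append_right (by omega : (u.drop r).length ≤ d)]
        have : (d - (u.drop r).length) = 0 := by omega
        simp only [this, List.getElem_cons_zero]
        exact lt_of_le_of_lt hta ha
    · -- mismatch within the matched region
      have hlen2 : (t.take d).length = (u.drop r).length := by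
        rw [List.length_take, hlen_ud]; omega
      rcases mism_total hlen2 hc with hm | hm
      · have : Mism (listPow t k ++ (u ++ [a'])) (u.drop r ++ [a']) := by
          apply mism_mono _ (List.prefix_append _ _) hm
          rw [hxsplit]
          exact (List.take_prefix _ _).trans (List.prefix_append _ _)
        exact mism_lt this
      · exfalso
        apply hnm
        apply mism_mono _ (List.take_prefix _ _) hm
        rw [hdropt]
        exact List.prefix_append _ _
end

section
/- Let w be a nonempty word over Σ with Lyndon factorization w₁, w₂, …, w_m and run-length encoding of length ρ. For any 1 ≤ i ≤ ρ, let 1 ≤ j, k ≤ m with j ≤ k be such that a_i^{rle} ∈ [a_j, b_j] and b_i^{rle} ∈ [a_k, b_k]. Then either j = k, or |w_j| = |w_k| = 1. -/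
variable {α : Type*}

/-- Starting position `a_j` (0-indexed `j`) of the `j`-th factor of a factorization `f`. -/
def factStart (f : List (List α)) (j : ℕ) : ℕ := ((f.take j).map List.length).sum

/-- Starting position `a_i^{rle}` (0-indexed `i`) of the `i`-th run of an RLE sequence `R`. -/
def rleStart (R : List (α × ℕ)) (i : ℕ) : ℕ := ((R.take i).map Prod.snd).sum

/-- The word encoded by an RLE sequence. -/
def rleWord (R : List (α × ℕ)) : List α :=
  (R.map (fun p => List.replicate p.2 p.1)).flatten


section Aux

variable {β : Type*}

lemma flatten_split (L : List (List β)) (j : ℕ) (hj : j < L.length) :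
    L.flatten = (L.take j).flatten ++ (L[j] ++ (L.drop (j+1)).flatten) := by
  conv_lhs => rw [← List.take_append_drop j L]
  rw [List.flatten_append, List.drop_eq_getElem_cons hj, List.flatten_cons]

lemma factStart_eq_len (f : List (List β)) (j : ℕ) :
    factStart f j = (f.take j).flatten.length := by
  simp [factStart, List.length_flatten]

lemma fact_char? (f : List (List β)) (j : ℕ) (hj : j < f.length) (p : ℕ)
    (hp : p < (f.get ⟨j, hj⟩).length) :
    f.flatten[factStart f j + p]? = (f.get ⟨j, hj⟩)[p]? := by
  rw [flatten_split f j hj, factStart_eq_len]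
  rw [List.getElem?_append_right (Nat.le_add_right _ _)]
  rw [Nat.add_sub_cancel_left]
  rw [List.getElem?_append, if_pos (by simpa using hp)]
  simp

lemma factStart_succ (f : List (List β)) (j : ℕ) (hj : j < f.length) :
    factStart f (j+1) = factStart f j + (f.get ⟨j, hj⟩).length := by
  rw [factStart, factStart, List.take_succ, List.getElem?_eq_getElem hj,
      List.map_append, List.sum_append]
  simp

lemma factStart_mono (f : List (List β)) {j k : ℕ} (h : j ≤ k) :
    factStart f j ≤ factStart f k := by
  unfold factStart
  conv_rhs => rw [← List.take_append_drop j (f.take k)]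
  rw [List.take_take, min_eq_left h, List.map_append, List.sum_append]
  exact Nat.le_add_right _ _

lemma rle_map (R : List (β × ℕ)) :
    rleWord R = (R.map (fun p => List.replicate p.2 p.1)).flatten := rfl

lemma rle_start_eq (R : List (β × ℕ)) (i : ℕ) :
    rleStart R i = factStart (R.map (fun p => List.replicate p.2 p.1)) i := by
  rw [rleStart, factStart, ← List.map_take, List.map_map]
  simp only [Function.comp_def, List.length_replicate]

lemma rle_char? (R : List (β × ℕ)) (i : ℕ) (hi : i < R.length) (t : ℕ)
    (ht : t < (R.get ⟨i, hi⟩).2) :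
    (rleWord R)[rleStart R i + t]? = some (R.get ⟨i, hi⟩).1 := by
  have hi' : i < (R.map (fun p => List.replicate p.2 p.1)).length := by simpa using hi
  rw [rle_map, rle_start_eq, fact_char? _ i hi' t (by simpa using ht)]
  have hrep : ((R.map (fun p => List.replicate p.2 p.1)).get ⟨i, hi'⟩)
      = List.replicate (R.get ⟨i, hi⟩).2 (R.get ⟨i, hi⟩).1 := by simp
  rw [hrep, List.getElem?_eq_getElem (by simpa using ht)]
  simp

end Aux

section Lex

variable [LinearOrder α]

lemma lt_append_right' (u : List α) {t : List α} (ht : t ≠ []) : u < u ++ t := by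
  induction u with
  | nil =>
    cases t with
    | nil => exact absurd rfl ht
    | cons a l => exact List.nil_lt_cons a l
  | cons a l ih => exact List.Lex.cons ih

lemma prefix_le' {u v : List α} (h : u <+: v) : u ≤ v := by
  obtain ⟨t, rfl⟩ := h
  cases t with
  | nil => rw [List.append_nil]
  | cons a l => exact le_of_lt (lt_append_right' u (by simp))

lemma lt_strong {u v : List α} (h : u < v) :
    u <+: v ∨ ∀ x y : List α, u ++ x < v ++ y := by
  have h' : List.Lex (· < ·) u v := h
  clear h
  induction h' with
  | nil => exact Or.inl (List.nil_prefix)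
  | @rel a l₁ b l₂ hab => exact Or.inr (fun x y => List.Lex.rel hab)
  | @cons a l₁ l₂ h ih =>
    rcases ih with hp | hs
    · exact Or.inl (List.cons_prefix_cons.mpr ⟨rfl, hp⟩)
    · exact Or.inr (fun x y => List.Lex.cons (hs x y))

lemma lt_of_append_lt {u x y : List α} (h : u ++ x < u ++ y) : x < y := by
  induction u with
  | nil => exact h
  | cons a l ih => exact ih (List.lex_cons_iff.mp h)

lemma lyndon_lt_drop_s14 {u : List α} (hu : IsLyndon u) {i : ℕ} (h0 : 0 < i)
    (hn : i < u.length) : u < u.drop i := by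
  rcases lt_trichotomy u (u.drop i) with h | h | h
  · exact h
  · exfalso
    have := congrArg List.length h
    simp only [List.length_drop] at this
    omega
  · exfalso
    have h1 : u < u.drop i ++ u.take i := hu.2 i h0 hn
    rcases lt_strong h with hp | hs
    · obtain ⟨r, hr⟩ := hp
      have hrlen : (u.drop i).length + r.length = u.length := by
        have := congrArg List.length hr; simpa using this
      simp only [List.length_drop] at hrlen
      have h3 : u < rot u (u.length - i) := hu.2 (u.length - i) (by omega) (by omega)
      have hdrop : u.drop (u.length - i) = r := by
        have h5 := List.drop_left (l₁ := u.drop i) (l₂ := r)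
        rw [hr] at h5
        simpa using h5
      have htake : u.take (u.length - i) = u.drop i := by
        have h6 := List.take_left (l₁ := u.drop i) (l₂ := r)
        rw [hr] at h6
        simpa using h6
      rw [rot, hdrop, htake] at h3
      have h2 : r < u.take i := lt_of_append_lt (by rw [hr]; exact h1)
      rcases lt_strong h2 with hp2 | hs2
      · have hre : r = u.take i :=
          hp2.eq_of_length (by simp only [List.length_take]; omega)
        rw [hre] at hr
        rw [hr] at h1
        exact absurd h1 (lt_irrefl _)
      · have h4 : r ++ u.drop i < u.take i ++ u.drop i := hs2 _ _
        rw [List.take_append_drop] at h4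
        exact absurd (h3.trans h4) (lt_irrefl _)
    · have h7 := hs (u.take i) []
      rw [List.append_nil] at h7
      exact absurd (h1.trans h7) (lt_irrefl _)

end Lex

/-- A run of the RLE either lies inside a single Lyndon factor, or the factors it
meets at its two endpoints are both of length 1. -/
theorem rle_run_vs_cfl [LinearOrder α] (w : List α) (hw : w ≠ [])
    (f : List (List α)) (hf : IsCFL w f)
    (R : List (α × ℕ)) (hR1 : ∀ p ∈ R, 1 ≤ p.2)
    (hR2 : R.Chain' (fun p q => p.1 ≠ q.1)) (hRw : rleWord R = w)
    (i j k : ℕ) (hi : i < R.length) (hj : j < f.length) (hk : k < f.length)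
    (hjk : j ≤ k)
    (hja : factStart f j ≤ rleStart R i ∧
      rleStart R i ≤ factStart f j + (f.get ⟨j, hj⟩).length - 1)
    (hkb : factStart f k ≤ rleStart R i + (R.get ⟨i, hi⟩).2 - 1 ∧
      rleStart R i + (R.get ⟨i, hi⟩).2 - 1 ≤ factStart f k + (f.get ⟨k, hk⟩).length - 1) :
    j = k ∨ ((f.get ⟨j, hj⟩).length = 1 ∧ (f.get ⟨k, hk⟩).length = 1) := by
  by_cases hjkeq : j = k
  · exact Or.inl hjkeq
  have hjk' : j < k := lt_of_le_of_ne hjk hjkeq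
  obtain ⟨hflat, hlyn, hchain⟩ := hf
  subst hflat
  have hwjlyn : IsLyndon (f.get ⟨j, hj⟩) := hlyn _ (List.get_mem f ⟨j, hj⟩)
  have hwklyn : IsLyndon (f.get ⟨k, hk⟩) := hlyn _ (List.get_mem f ⟨k, hk⟩)
  have hwjlen : 1 ≤ (f.get ⟨j, hj⟩).length := List.length_pos_iff.mpr hwjlyn.1
  have hwklen : 1 ≤ (f.get ⟨k, hk⟩).length := List.length_pos_iff.mpr hwklyn.1
  have hl : 1 ≤ (R.get ⟨i, hi⟩).2 := hR1 _ (List.get_mem R ⟨i, hi⟩)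
  -- position facts
  have hstep : factStart f j + (f.get ⟨j, hj⟩).length ≤ factStart f k := by
    have h1 := factStart_succ f j hj
    have h2 := factStart_mono f (show j + 1 ≤ k from hjk')
    omega
  have hbj_ge : rleStart R i ≤ factStart f j + ((f.get ⟨j, hj⟩).length - 1) := by
    have := hja.2; omega
  have hak_le : factStart f k ≤ rleStart R i + ((R.get ⟨i, hi⟩).2 - 1) := by
    have := hkb.1; omega
  -- positions inside the run carry the character of the run
  have hchar : ∀ n, rleStart R i ≤ n → n ≤ rleStart R i + ((R.get ⟨i, hi⟩).2 - 1) →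
      f.flatten[n]? = some (R.get ⟨i, hi⟩).1 := by
    intro n hn1 hn2
    have hx : n = rleStart R i + (n - rleStart R i) := by omega
    rw [← hRw, hx]
    exact rle_char? R i hi _ (by omega)
  -- last letter of factor j is the run character
  have hlast? : (f.get ⟨j, hj⟩)[(f.get ⟨j, hj⟩).length - 1]? = some (R.get ⟨i, hi⟩).1 := by
    rw [← fact_char? f j hj _ (by omega)]
    exact hchar _ (by omega) (by omega)
  -- first letter of factor k is the run character
  have hhead? : (f.get ⟨k, hk⟩)[0]? = some (R.get ⟨i, hi⟩).1 := by
    rw [← fact_char? f k hk 0 (by omega)]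
    exact hchar _ (by omega) (by omega)
  -- factor k starts with the run character
  obtain ⟨b, t, hbt⟩ := List.exists_cons_of_ne_nil hwklyn.1
  have hbc : b = (R.get ⟨i, hi⟩).1 := by
    rw [hbt] at hhead?; simpa using hhead?
  subst hbc
  -- the chain condition gives wₖ ≤ wⱼ
  have hpw : List.Pairwise (· ≥ ·) f := List.isChain_iff_pairwise.mp hchain
  have hge : f.get ⟨k, hk⟩ ≤ f.get ⟨j, hj⟩ :=
    List.pairwise_iff_get.mp hpw ⟨j, hj⟩ ⟨k, hk⟩ (Fin.mk_lt_mk.mpr hjk')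
  by_cases h1 : (f.get ⟨j, hj⟩).length = 1
  · right
    refine ⟨h1, ?_⟩
    obtain ⟨a, ha⟩ := List.length_eq_one_iff.mp h1
    have haa : a = (R.get ⟨i, hi⟩).1 := by
      rw [ha] at hlast?; simpa using hlast?
    cases t with
    | nil => rw [hbt]; rfl
    | cons x xs =>
      exfalso
      have hlt : f.get ⟨j, hj⟩ < f.get ⟨k, hk⟩ := by
        rw [ha, haa, hbt]
        exact lt_append_right' [(R.get ⟨i, hi⟩).1] (by simp)
      exact absurd (lt_of_lt_of_le hlt hge) (lt_irrefl _)
  · exfalso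
    have hlt2 : (f.get ⟨j, hj⟩).length - 1 < (f.get ⟨j, hj⟩).length := by omega
    have hlast : (f.get ⟨j, hj⟩)[(f.get ⟨j, hj⟩).length - 1]'hlt2 = (R.get ⟨i, hi⟩).1 := by
      rw [List.getElem?_eq_getElem hlt2] at hlast?
      simpa using hlast?
    have hdrop : (f.get ⟨j, hj⟩).drop ((f.get ⟨j, hj⟩).length - 1) = [(R.get ⟨i, hi⟩).1] := by
      rw [List.drop_eq_getElem_cons hlt2]
      have hx : (f.get ⟨j, hj⟩).length - 1 + 1 = (f.get ⟨j, hj⟩).length := by omega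
      rw [hx, List.drop_length, hlast]
    have hlt : f.get ⟨j, hj⟩ < [(R.get ⟨i, hi⟩).1] := by
      rw [← hdrop]
      exact lyndon_lt_drop_s14 hwjlyn (by omega) (by omega)
    have hpre : [(R.get ⟨i, hi⟩).1] ≤ f.get ⟨k, hk⟩ := by
      rw [hbt]; exact prefix_le' ⟨t, rfl⟩
    exact absurd (lt_of_lt_of_le (lt_of_lt_of_le hlt hpre) hge) (lt_irrefl _)
end
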